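/- Trimming bound: let Δ⁻ be an integrable random variable with integrated quantile function I and mean μ = I(1). For every δ ∈ (0,1] and every integrable random variable M with E[M] = μ and I_M(q) ≥ I(q) for all q ∈ [0,1], and every event A (in the probability space on which M lives, with M defined via a uniform U and A = {U ∈ [u, u+δ]} ⊆ [0,1]): the conditional mean satisfies I(δ)/δ ≤ E[M | U ∈ [u,u+δ]] ≤ (μ − I(1−δ))/δ. More precisely, for any measurable m : [0,1] → ℝ with U ~ U[0,1], E[m(U)] = μ, and m(U) ⪰_SSD Δ⁻: I(δ) ≤ ∫_u^{u+δ} m(s) ds ≤ μ − I(1−δ) for all [u, u+δ] ⊆ [0,1]. -/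

import Mathlib

open MeasureTheory ProbabilityTheory Set

/-- Quantile function of a measure on ℝ. -/
noncomputable def quantileFn (μ : Measure ℝ) (q : ℝ) : ℝ :=
  sInf {x : ℝ | q ≤ (μ (Set.Iic x)).toReal}

/-- Integrated quantile function. -/
noncomputable def iqf (μ : Measure ℝ) (q : ℝ) : ℝ :=
  ∫ s in (0:ℝ)..q, quantileFn μ s

/-- The uniform distribution on `[0,1]`. -/
noncomputable def unif01 : Measure ℝ := volume.restrict (Set.Icc (0:ℝ) 1)

open Filter
open scoped Topology

section aux
variable (θ : Measure ℝ) [IsProbabilityMeasure θ]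

lemma qf_eq (s : ℝ) : quantileFn θ s = sInf {x | s ≤ cdf θ x} := by
  simp_rw [quantileFn, cdf_eq_real, measureReal_def]

lemma qset_nonempty {s : ℝ} (hs : s < 1) : {x | s ≤ cdf θ x}.Nonempty := by
  obtain ⟨x, hx⟩ := (Filter.Tendsto.eventually_const_le hs (tendsto_cdf_atTop θ)).exists
  exact ⟨x, hx⟩

lemma qset_bddBelow {s : ℝ} (hs : 0 < s) : BddBelow {x | s ≤ cdf θ x} := by
  obtain ⟨x₀, hx₀⟩ := eventually_atBot.mp
    (Filter.Tendsto.eventually_lt_const hs (tendsto_cdf_atBot θ))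
  refine ⟨x₀, fun x hx => ?_⟩
  by_contra h
  exact absurd hx (not_le.mpr (hx₀ x (le_of_not_ge h)))

lemma csInf_mem_qset {s : ℝ} (hs0 : 0 < s) (hs1 : s < 1) :
    sInf {x | s ≤ cdf θ x} ∈ {x | s ≤ cdf θ x} := by
  set S := {x | s ≤ cdf θ x} with hS
  have hne := qset_nonempty θ hs1
  have hbd := qset_bddBelow θ hs0
  set a := sInf S with ha
  have h1 : ∀ x, a < x → s ≤ cdf θ x := by
    intro x hx
    obtain ⟨y, hyS, hyx⟩ := exists_lt_of_csInf_lt hne hx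
    exact le_trans hyS (monotone_cdf θ hyx.le)
  have h2 : Tendsto (cdf θ) (𝓝[>] a) (𝓝 (cdf θ a)) :=
    ((cdf θ).right_continuous a).tendsto.mono_left (nhdsWithin_mono a Ioi_subset_Ici_self)
  have h3 : ∀ᶠ x in 𝓝[>] a, s ≤ cdf θ x :=
    eventually_mem_nhdsWithin.mono fun x hx => h1 x hx
  exact ge_of_tendsto h2 h3

lemma quantile_le_iff {s x : ℝ} (hs0 : 0 < s) (hs1 : s < 1) :
    quantileFn θ s ≤ x ↔ s ≤ cdf θ x := by
  rw [qf_eq]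
  constructor
  · intro h
    exact le_trans (csInf_mem_qset θ hs0 hs1) (monotone_cdf θ h)
  · intro h
    exact csInf_le (qset_bddBelow θ hs0) h

lemma quantile_monoOn : MonotoneOn (quantileFn θ) (Ioo 0 1) := by
  intro s hs t ht hst
  rw [qf_eq, qf_eq]
  exact csInf_le_csInf (qset_bddBelow θ hs.1) (qset_nonempty θ ht.2)
    (fun x hx => le_trans hst hx)

end aux

section aux2
variable (θ : Measure ℝ) [IsProbabilityMeasure θ]

lemma prob_restrict_Ioo : IsProbabilityMeasure (volume.restrict (Ioo (0:ℝ) 1)) := by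
  constructor
  rw [Measure.restrict_apply_univ, Real.volume_Ioo]
  norm_num

lemma aemeas_quantile : AEMeasurable (quantileFn θ) (volume.restrict (Ioo (0:ℝ) 1)) :=
  aemeasurable_restrict_of_monotoneOn measurableSet_Ioo (quantile_monoOn θ)

lemma map_quantile :
    Measure.map (quantileFn θ) (volume.restrict (Ioo (0:ℝ) 1)) = θ := by
  have := prob_restrict_Ioo
  have hmap : IsProbabilityMeasure
      (Measure.map (quantileFn θ) (volume.restrict (Ioo (0:ℝ) 1))) :=
    Measure.isProbabilityMeasure_map (aemeas_quantile θ)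
  refine Measure.ext_of_Iic _ _ (fun x => ?_)
  rw [Measure.map_apply_of_aemeasurable (aemeas_quantile θ) measurableSet_Iic,
    Measure.restrict_apply' measurableSet_Ioo]
  have hset : quantileFn θ ⁻¹' Iic x ∩ Ioo 0 1 = Iic (cdf θ x) ∩ Ioo 0 1 := by
    ext s
    simp only [mem_inter_iff, mem_preimage, mem_Iic, mem_Ioo, and_congr_left_iff]
    intro hs
    rw [quantile_le_iff θ hs.1 hs.2]
  rw [hset, ← ofReal_cdf θ x]
  have h0 : (0:ℝ) ≤ cdf θ x := cdf_nonneg θ x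
  have h1 : cdf θ x ≤ 1 := cdf_le_one θ x
  refine le_antisymm ?_ ?_
  · calc volume (Iic (cdf θ x) ∩ Ioo 0 1) ≤ volume (Ioc 0 (cdf θ x)) := by
          apply measure_mono
          rintro s ⟨h1s, h2s, _⟩
          exact ⟨h2s, h1s⟩
        _ = ENNReal.ofReal (cdf θ x) := by rw [Real.volume_Ioc, sub_zero]
  · calc ENNReal.ofReal (cdf θ x) = volume (Ioo 0 (cdf θ x)) := by
          rw [Real.volume_Ioo, sub_zero]
        _ ≤ volume (Iic (cdf θ x) ∩ Ioo 0 1) := by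
          apply measure_mono
          rintro s ⟨h1s, h2s⟩
          exact ⟨h2s.le, h1s, lt_of_lt_of_le h2s h1⟩

lemma integral_quantile {g : ℝ → ℝ} (hg : Integrable g θ) :
    ∫ x, g x ∂θ = ∫ s in Ioo (0:ℝ) 1, g (quantileFn θ s) := by
  conv_lhs => rw [← map_quantile θ]
  rw [integral_map (aemeas_quantile θ)]
  rw [map_quantile θ]
  exact hg.aestronglyMeasurable

lemma integrable_quantile_comp {g : ℝ → ℝ} (hg : Integrable g θ) :
    IntegrableOn (fun s => g (quantileFn θ s)) (Ioo (0:ℝ) 1) := by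
  have h1 : AEStronglyMeasurable g
      (Measure.map (quantileFn θ) (volume.restrict (Ioo (0:ℝ) 1))) := by
    rw [map_quantile θ]; exact hg.aestronglyMeasurable
  have h2 : Integrable g (Measure.map (quantileFn θ) (volume.restrict (Ioo (0:ℝ) 1))) := by
    rw [map_quantile θ]; exact hg
  exact (integrable_map_measure h1 (aemeas_quantile θ)).mp h2

end aux2

lemma unif01_eq : unif01 = volume.restrict (Set.Icc (0:ℝ) 1) := rfl

instance : IsProbabilityMeasure unif01 := by
  constructor
  rw [unif01_eq, Measure.restrict_apply_univ, Real.volume_Icc]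
  norm_num

set_option maxHeartbeats 1000000 in
lemma key_lemma (m : ℝ → ℝ) (hm : Measurable m) (hmi : IntegrableOn m (Set.Icc (0:ℝ) 1))
    {A : Set ℝ} (hA : MeasurableSet A) (hAsub : A ⊆ Set.Icc (0:ℝ) 1)
    {δ : ℝ} (hδ0 : 0 < δ) (hδ1 : δ < 1) (hvol : volume A = ENNReal.ofReal δ) :
    iqf (Measure.map m unif01) δ ≤ ∫ x in A, m x := by
  set θ := Measure.map m unif01 with hθ
  haveI : IsProbabilityMeasure θ := Measure.isProbabilityMeasure_map hm.aemeasurable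
  set Q := quantileFn θ with hQ
  set c := Q δ with hc
  have hμm : Integrable m unif01 := by rw [unif01_eq]; exact hmi
  have hInt_id : Integrable (fun x : ℝ => x) θ := by
    rw [hθ]
    exact (integrable_map_measure aestronglyMeasurable_id hm.aemeasurable).mpr hμm
  have hInt_gc : Integrable (fun x => max (c - x) 0) θ :=
    ((integrable_const c).sub hInt_id).pos_part
  have hconst : ∀ (s : Set ℝ), volume s < ⊤ → IntegrableOn (fun _ : ℝ => c) s volume :=
    fun s hs => integrableOn_const hs.ne
  have hvIoo : volume (Ioo (0:ℝ) δ) < ⊤ := by rw [Real.volume_Ioo]; exact ENNReal.ofReal_lt_top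
  have hvIco : volume (Ico δ (1:ℝ)) < ⊤ := by rw [Real.volume_Ico]; exact ENNReal.ofReal_lt_top
  have hvIcc : volume (Set.Icc (0:ℝ) 1) < ⊤ := by rw [Real.volume_Icc]; exact ENNReal.ofReal_lt_top
  have hvA : volume A < ⊤ := by rw [hvol]; exact ENNReal.ofReal_lt_top
  have hQint : IntegrableOn Q (Ioo (0:ℝ) 1) volume :=
    integrable_quantile_comp θ (g := fun x : ℝ => x) hInt_id
  -- Step A
  have hiqf : iqf θ δ = ∫ s in Ioo (0:ℝ) δ, Q s := by
    rw [iqf, intervalIntegral.integral_of_le hδ0.le,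
      setIntegral_congr_set Ioo_ae_eq_Ioc.symm]
  -- monotonicity facts
  have hQc : ∀ s ∈ Ioo (0:ℝ) δ, Q s ≤ c := fun s hs =>
    quantile_monoOn θ ⟨hs.1, hs.2.trans hδ1⟩ ⟨hδ0, hδ1⟩ hs.2.le
  have hQc2 : ∀ s ∈ Ico δ (1:ℝ), c ≤ Q s := fun s hs =>
    quantile_monoOn θ ⟨hδ0, hδ1⟩ ⟨hδ0.trans_le hs.1, hs.2⟩ hs.1
  -- E1
  have hsplit : Ioo (0:ℝ) 1 = Ioo 0 δ ∪ Ico δ 1 := (Ioo_union_Ico_eq_Ioo hδ0 hδ1.le).symm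
  have hint1 : IntegrableOn (fun s => max (c - Q s) 0) (Ioo (0:ℝ) δ) volume :=
    ((hconst _ hvIoo).sub (hQint.mono_set (Ioo_subset_Ioo le_rfl hδ1.le))).pos_part
  have hint2 : IntegrableOn (fun s => max (c - Q s) 0) (Ico δ (1:ℝ)) volume :=
    ((hconst _ hvIco).sub (hQint.mono_set
      (fun s hs => ⟨hδ0.trans_le hs.1, hs.2⟩))).pos_part
  have E1 : ∫ s in Ioo (0:ℝ) 1, max (c - Q s) 0 = ∫ s in Ioo (0:ℝ) δ, (c - Q s) := by
    rw [hsplit, setIntegral_union (Set.Ico_disjoint_Ico_same.mono_left Set.Ioo_subset_Ico_self) measurableSet_Ico hint1 hint2]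
    rw [setIntegral_congr_fun measurableSet_Ioo
      (fun s hs => max_eq_left (sub_nonneg.mpr (hQc s hs)) : EqOn _ (fun s => c - Q s) _)]
    rw [setIntegral_congr_fun measurableSet_Ico
      (fun s hs => max_eq_right (sub_nonpos.mpr (hQc2 s hs)) : EqOn _ (fun _ => (0:ℝ)) _)]
    simp
  -- E2
  have E2 : ∫ s in Ioo (0:ℝ) δ, (c - Q s) = c * δ - ∫ s in Ioo (0:ℝ) δ, Q s := by
    rw [integral_sub (hconst _ hvIoo)
      (hQint.mono_set (Ioo_subset_Ioo le_rfl hδ1.le)), setIntegral_const]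
    rw [measureReal_def, Real.volume_Ioo, sub_zero, ENNReal.toReal_ofReal hδ0.le, smul_eq_mul, mul_comm]
  -- E3
  have E3 : ∫ s in Ioo (0:ℝ) 1, max (c - Q s) 0 = ∫ u in Set.Icc (0:ℝ) 1, max (c - m u) 0 := by
    rw [← integral_quantile θ (g := fun x => max (c - x) 0) hInt_gc, hθ, integral_map hm.aemeasurable hInt_gc.aestronglyMeasurable,
      unif01_eq]
  -- E4
  have hIccInt : IntegrableOn (fun u => max (c - m u) 0) (Set.Icc (0:ℝ) 1) volume :=
    ((hconst _ hvIcc).sub hmi).pos_part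
  have E4 : ∫ u in A, max (c - m u) 0 ≤ ∫ u in Set.Icc (0:ℝ) 1, max (c - m u) 0 :=
    setIntegral_mono_set hIccInt (Eventually.of_forall fun u => le_max_right _ 0)
      (HasSubset.Subset.eventuallyLE hAsub)
  -- E5
  have hmiA : IntegrableOn m A volume := hmi.mono_set hAsub
  have hcmA : IntegrableOn (fun u => c - m u) A volume := (hconst _ hvA).sub hmiA
  have E5 : ∫ u in A, (c - m u) ≤ ∫ u in A, max (c - m u) 0 :=
    integral_mono hcmA hcmA.pos_part (fun u => le_max_left _ 0)
  have E6 : ∫ u in A, (c - m u) = c * δ - ∫ u in A, m u := by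
    rw [integral_sub (hconst _ hvA) hmiA,
      setIntegral_const, measureReal_def, hvol, ENNReal.toReal_ofReal hδ0.le, smul_eq_mul, mul_comm]
  -- conclude
  have : c * δ - ∫ u in A, m u ≤ c * δ - ∫ s in Ioo (0:ℝ) δ, Q s := by
    calc c * δ - ∫ u in A, m u = ∫ u in A, (c - m u) := E6.symm
      _ ≤ ∫ u in A, max (c - m u) 0 := E5
      _ ≤ ∫ u in Set.Icc (0:ℝ) 1, max (c - m u) 0 := E4
      _ = ∫ s in Ioo (0:ℝ) 1, max (c - Q s) 0 := E3.symm
      _ = ∫ s in Ioo (0:ℝ) δ, (c - Q s) := E1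
      _ = c * δ - ∫ s in Ioo (0:ℝ) δ, Q s := E2
  rw [hiqf]
  linarith

lemma iqf_one (θ : Measure ℝ) [IsProbabilityMeasure θ]
    (hInt : Integrable (fun x : ℝ => x) θ) : iqf θ 1 = ∫ x, x ∂θ := by
  rw [iqf, intervalIntegral.integral_of_le zero_le_one,
    setIntegral_congr_set Ioo_ae_eq_Ioc.symm,
    integral_quantile θ (g := fun x : ℝ => x) hInt]

/-- trimming bound: let `ν` be the law of `Δ⁻` with IQF `I` and
mean `μ = I(1) = ∫ x ∂ν`. For any measurable `m : [0,1] → ℝ` with `U ∼ U[0,1]`,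
`E[m(U)] = μ`, and `m(U) ⪰_SSD Δ⁻`, and any interval `[u, u+δ] ⊆ [0,1]` with
`δ > 0`:  `I(δ) ≤ ∫_u^{u+δ} m(s) ds ≤ μ − I(1−δ)`. -/
theorem stmt_7 (ν : Measure ℝ) [IsProbabilityMeasure ν]
    (hν : Integrable (fun x : ℝ => x) ν)
    (m : ℝ → ℝ) (hm : Measurable m) (hmi : IntegrableOn m (Set.Icc (0:ℝ) 1))
    (hmean : ∫ u in Set.Icc (0:ℝ) 1, m u = ∫ x, x ∂ν)
    (hssd : ∀ q ∈ Set.Icc (0:ℝ) 1, iqf ν q ≤ iqf (Measure.map m unif01) q) :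
    ∀ u δ : ℝ, 0 < δ → 0 ≤ u → u + δ ≤ 1 →
      iqf ν δ ≤ (∫ s in u..(u + δ), m s) ∧
        (∫ s in u..(u + δ), m s) ≤ (∫ x, x ∂ν) - iqf ν (1 - δ) := by
  intro u δ hδ hu huδ
  set θ := Measure.map m unif01 with hθ
  haveI : IsProbabilityMeasure θ := Measure.isProbabilityMeasure_map hm.aemeasurable
  have hμm : Integrable m unif01 := by rw [unif01_eq]; exact hmi
  have hInt_id : Integrable (fun x : ℝ => x) θ := by
    rw [hθ]
    exact (integrable_map_measure aestronglyMeasurable_id hm.aemeasurable).mpr hμm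
  have hIcc_eq_Ioc : ∫ x in Set.Icc (0:ℝ) 1, m x = ∫ x in Set.Ioc (0:ℝ) 1, m x :=
    (setIntegral_congr_set Ioc_ae_eq_Icc).symm
  have hθmean : iqf θ 1 = ∫ x, x ∂ν := by
    rw [iqf_one θ hInt_id, hθ, show (∫ x, x ∂Measure.map m unif01) = ∫ y, m y ∂unif01 from
      integral_map hm.aemeasurable aestronglyMeasurable_id, unif01_eq, ← hmean]
  have hδ1' : δ ≤ 1 := by linarith
  have hu1 : u ≤ 1 := by linarith
  -- interval integral as set integral
  have hIoc : ∫ s in u..(u + δ), m s = ∫ s in Set.Ioc u (u + δ), m s :=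
    intervalIntegral.integral_of_le (by linarith)
  rcases eq_or_lt_of_le hδ1' with hδ1 | hδ1
  · -- δ = 1, u = 0
    have hu0 : u = 0 := le_antisymm (by linarith) hu
    have hval : ∫ s in u..(u + δ), m s = ∫ x, x ∂ν := by
      rw [hIoc, hu0, hδ1]
      rw [zero_add, ← hIcc_eq_Ioc, hmean]
    constructor
    · rw [hval, hδ1, ← hθmean]
      exact hssd 1 ⟨zero_le_one, le_rfl⟩
    · rw [hval, hδ1, sub_self]
      have : iqf ν 0 = 0 := intervalIntegral.integral_same
      rw [this, sub_zero]
  · -- δ < 1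
    constructor
    · -- lower bound
      have hkey := key_lemma m hm hmi (A := Set.Ioc u (u + δ)) measurableSet_Ioc
        (fun s hs => ⟨le_trans hu hs.1.le, le_trans hs.2 huδ⟩) hδ hδ1
        (by rw [Real.volume_Ioc]; congr 1; ring)
      rw [hIoc]
      exact le_trans (hssd δ ⟨hδ.le, hδ1'⟩) hkey
    · -- upper bound
      set B := Set.Ioc (0:ℝ) u ∪ Set.Ioc (u + δ) 1 with hB
      have hdisj : Disjoint (Set.Ioc (0:ℝ) u) (Set.Ioc (u + δ) 1) := by
        apply Set.disjoint_left.mpr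
        rintro s ⟨_, hsu⟩ ⟨hs2, _⟩
        linarith
      have hBmeas : MeasurableSet B := measurableSet_Ioc.union measurableSet_Ioc
      have hBsub : B ⊆ Set.Icc (0:ℝ) 1 := by
        rintro s (⟨h1, h2⟩ | ⟨h1, h2⟩)
        · exact ⟨h1.le, le_trans h2 hu1⟩
        · exact ⟨le_trans (by linarith) h1.le, h2⟩
      have hBvol : volume B = ENNReal.ofReal (1 - δ) := by
        rw [hB, measure_union hdisj measurableSet_Ioc, Real.volume_Ioc, Real.volume_Ioc,
          sub_zero, ← ENNReal.ofReal_add hu (by linarith)]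
        congr 1; ring
      have hkey := key_lemma m hm hmi hBmeas hBsub (by linarith) (by linarith) hBvol
      have hIB : ∫ x in B, m x = (∫ s in Set.Ioc (0:ℝ) u, m s) + ∫ s in Set.Ioc (u + δ) 1, m s := by
        rw [hB, setIntegral_union hdisj measurableSet_Ioc
          (hmi.mono_set (fun s hs => ⟨hs.1.le, le_trans hs.2 hu1⟩))
          (hmi.mono_set (fun s hs => ⟨le_trans (by linarith) hs.1.le, hs.2⟩))]
      have hii : ∀ a b : ℝ, 0 ≤ a → a ≤ 1 → 0 ≤ b → b ≤ 1 → IntervalIntegrable m volume a b := by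
        intro a b ha0 ha1 hb0 hb1
        apply (hmi.mono_set _).intervalIntegrable
        intro s hs
        exact ⟨le_trans (le_inf ha0 hb0) hs.1, le_trans hs.2 (sup_le ha1 hb1)⟩
      have hadd : (∫ s in (0:ℝ)..u, m s) + (∫ s in u..(u+δ), m s) + (∫ s in (u+δ)..1, m s)
          = ∫ s in (0:ℝ)..1, m s := by
        rw [intervalIntegral.integral_add_adjacent_intervals (hii 0 u le_rfl zero_le_one hu hu1)
          (hii u (u+δ) hu hu1 (by linarith) huδ)]
        exact intervalIntegral.integral_add_adjacent_intervals (hii 0 (u+δ) le_rfl zero_le_one (by linarith) huδ)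
          (hii (u+δ) 1 (by linarith) huδ zero_le_one le_rfl)
      have h01 : ∫ s in (0:ℝ)..1, m s = ∫ x, x ∂ν := by
        rw [intervalIntegral.integral_of_le zero_le_one, ← hIcc_eq_Ioc, hmean]
      have h0u : ∫ s in (0:ℝ)..u, m s = ∫ s in Set.Ioc (0:ℝ) u, m s :=
        intervalIntegral.integral_of_le hu
      have hu1' : ∫ s in (u+δ)..1, m s = ∫ s in Set.Ioc (u+δ) 1, m s :=
        intervalIntegral.integral_of_le huδ
      have hνle : iqf ν (1 - δ) ≤ ∫ x in B, m x :=
        le_trans (hssd (1 - δ) ⟨by linarith, by linarith⟩) hkey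
      rw [hIB, ← h0u, ← hu1'] at hνle
      linarith
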